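/- arXiv:2103.09286 — 2 statements merged into one kernel-verified Lean document; each statement's English description precedes it below -/
import Mathlib

section
/- For any m ≥ 1 and integers 1 ≤ a_1 < a_2 < ... < a_{m+2} ≤ n, the sum over i from 1 to m+2 of the top-dimensional stair convex chains stc^m_m(a_1, ..., â_i, ..., a_{m+2}) (where â_i means a_i is omitted) equals the zero chain in C_m(G[n]^m; Z_2). -/
/-- A cell of a grid complex `G[n]^m`: a list of `m` factors, each either a
vertex `{a}` (encoded `(a, false)`) or a unit interval `[a, a+1]` (encoded `(a, true)`). -/
abbrev GCell := List (ℕ × Bool)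

/-- Cellular chains with `ℤ/2` coefficients. -/
abbrev GChain := GCell →₀ ZMod 2

/-- Product of chains, induced by concatenation of cells. -/
noncomputable def prodC (α β : GChain) : GChain :=
  α.sum fun c x => β.sum fun d y => Finsupp.single (c ++ d) (x * y)

/-- The vertex `{a}` of `G[n]`, as a chain. -/
noncomputable def vtx (a : ℕ) : GChain := Finsupp.single [(a, false)] 1

/-- The unit interval `[a, a+1]` of `G[n]`, as a chain. -/
noncomputable def seg (a : ℕ) : GChain := Finsupp.single [(a, true)] 1

/-- The 1-chain `[a,b] = [a,a+1] + ... + [b-1,b]` (symmetrized so `[b,a] = [a,b]`). -/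
noncomputable def intervalC (a b : ℕ) : GChain :=
  ∑ j ∈ Finset.Ico (min a b) (max a b), seg j

/-- The diagonal vertex `(a, ..., a)` of `G[n]^m`. -/
noncomputable def diag (m a : ℕ) : GChain := Finsupp.single (List.replicate m (a, false)) 1

/-- Stair convex chains, with the list of parameters in *reverse* (decreasing) order. -/
noncomputable def stcR : ℕ → List ℕ → GChain
  | 0, [_] => Finsupp.single [] 1
  | 0, _ => 0
  | _ + 1, [] => 0
  | m + 1, [a] => prodC (stcR m [a]) (vtx a)
  | m + 1, b :: c :: rest =>
      prodC (stcR m (c :: rest)) (intervalC c b) + prodC (stcR m (b :: c :: rest)) (vtx b)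

/-- The stair convex chain `stc^m_k (a₁, ..., a_{k+1})` where the parameters are
given as the (increasing) list `l = [a₁, ..., a_{k+1}]` with `k = l.length - 1`. -/
noncomputable def stc (m : ℕ) (l : List ℕ) : GChain := stcR m l.reverse

/-- Boundary of a cell, via the product rule `∂(σ×τ) = ∂σ×τ + σ×∂τ`,
`∂{a} = 0`, `∂[a,a+1] = {a} + {a+1}`. -/
noncomputable def bndCell : GCell → GChain
  | [] => 0
  | (a, false) :: rest => prodC (vtx a) (bndCell rest)
  | (a, true) :: rest =>
      prodC (vtx a + vtx (a + 1)) (Finsupp.single rest 1) + prodC (seg a) (bndCell rest)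

/-- The boundary operator on chains, extended linearly. -/
noncomputable def bnd (α : GChain) : GChain := α.sum fun c x => x • bndCell c

/-- Ordered product of a list of chains. -/
noncomputable def bigProd (l : List GChain) : GChain := l.foldr prodC (Finsupp.single [] 1)

/-- `c` is a cell of the grid complex `G[n]^m`. -/
def isCellOf (m n : ℕ) (c : GCell) : Prop :=
  c.length = m ∧ ∀ e ∈ c, 1 ≤ e.1 ∧ (if e.2 then e.1 + 1 else e.1) ≤ n

/-- Dimension of a cell: the number of interval factors. -/
def dimCell (c : GCell) : ℕ := (c.filter fun e => e.2).length

-- auxiliary lemmas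

lemma gchain_add_self (α : GChain) : α + α = 0 := by
  ext c
  simp only [Finsupp.add_apply, Finsupp.coe_zero, Pi.zero_apply]
  exact CharTwo.add_self_eq_zero _

lemma prodC_zero_left (β : GChain) : prodC 0 β = 0 := Finsupp.sum_zero_index

lemma prodC_add_left (α α' β : GChain) :
    prodC (α + α') β = prodC α β + prodC α' β := by
  unfold prodC
  apply Finsupp.sum_add_index
  · intro c _
    simp
  · intro c _ x x'
    simp [add_mul, Finsupp.single_add, Finsupp.sum_add]

lemma prodC_add_right (α β β' : GChain) :
    prodC α (β + β') = prodC α β + prodC α β' := by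
  unfold prodC
  rw [← Finsupp.sum_add]
  apply Finsupp.sum_congr
  intro c _
  apply Finsupp.sum_add_index
  · intro d _
    simp
  · intro d _ y y'
    simp [mul_add, Finsupp.single_add]

lemma prodC_sum_left {ι : Type*} (s : Finset ι) (g : ι → GChain) (β : GChain) :
    prodC (∑ i ∈ s, g i) β = ∑ i ∈ s, prodC (g i) β := by
  classical
  induction s using Finset.induction with
  | empty => simp [prodC_zero_left]
  | insert _ _ h ih => simp [Finset.sum_insert h, prodC_add_left, ih]

lemma stcR_long : ∀ (m : ℕ) (l : List ℕ), m + 2 ≤ l.length → stcR m l = 0 := by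
  intro m
  induction m with
  | zero =>
    intro l hl
    match l, hl with
    | a :: b :: t, _ => rfl
  | succ m ih =>
    intro l hl
    match l, hl with
    | b :: c :: rest, hl =>
      have h1 : m + 2 ≤ (c :: rest).length := by simp at hl ⊢; omega
      have h2 : m + 2 ≤ (b :: c :: rest).length := by simp at hl ⊢; omega
      show prodC (stcR m (c :: rest)) _ + prodC (stcR m (b :: c :: rest)) _ = 0
      rw [ih _ h1, ih _ h2, prodC_zero_left, prodC_zero_left, add_zero]

/-- explicit product of intervals for the top-dimensional stair chain,
on a decreasing list of parameters -/
noncomputable def stairs : List ℕ → GChain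
  | [] => 0
  | [_] => Finsupp.single [] 1
  | b :: c :: rest => prodC (stairs (c :: rest)) (intervalC c b)

lemma stcR_eq_stairs : ∀ (m : ℕ) (l : List ℕ), l.length = m + 1 → stcR m l = stairs l := by
  intro m
  induction m with
  | zero =>
    intro l hl
    match l, hl with
    | [a], _ => rfl
  | succ m ih =>
    intro l hl
    match l, hl with
    | b :: c :: rest, hl =>
      have h1 : (c :: rest).length = m + 1 := by simp at hl ⊢; omega
      have h2 : m + 2 ≤ (b :: c :: rest).length := by simp at hl ⊢; omega
      show prodC (stcR m (c :: rest)) _ + prodC (stcR m (b :: c :: rest)) _ = _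
      rw [ih _ h1, stcR_long _ _ h2, prodC_zero_left, add_zero]
      rfl

lemma intervalC_split {x y z : ℕ} (hxy : x ≤ y) (hyz : y ≤ z) :
    intervalC x z = intervalC x y + intervalC y z := by
  unfold intervalC
  rw [min_eq_left (hxy.trans hyz), max_eq_right (hxy.trans hyz),
    min_eq_left hxy, max_eq_right hxy, min_eq_left hyz, max_eq_right hyz]
  exact (Finset.sum_Ico_consecutive _ hxy hyz).symm

lemma main_aux : ∀ (rest : List ℕ) (x y z : ℕ),
    (x :: y :: z :: rest).Chain' (fun p q => q ≤ p) →
    ∑ i ∈ Finset.range (rest.length + 3), stairs ((x :: y :: z :: rest).eraseIdx i) = 0 := by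
  intro rest
  induction rest with
  | nil =>
    intro x y z h
    simp only [List.Chain', List.isChain_cons_cons, List.isChain_singleton, and_true] at h
    obtain ⟨hyx, hzy⟩ := h
    have e0 : ([x, y, z].eraseIdx 0) = [y, z] := rfl
    have e1 : ([x, y, z].eraseIdx 1) = [x, z] := rfl
    have e2 : ([x, y, z].eraseIdx 2) = [x, y] := rfl
    show ∑ i ∈ Finset.range 3, stairs ([x, y, z].eraseIdx i) = 0
    rw [Finset.sum_range_succ, Finset.sum_range_succ, Finset.sum_range_one, e0, e1, e2]
    show prodC (Finsupp.single [] 1) (intervalC z y) +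
      prodC (Finsupp.single [] 1) (intervalC z x) +
      prodC (Finsupp.single [] 1) (intervalC y x) = 0
    rw [intervalC_split hzy hyx, prodC_add_right]
    have : ∀ u v : GChain, u + (u + v) + v = 0 := by
      intro u v
      calc u + (u + v) + v = (u + u) + (v + v) := by abel
      _ = 0 := by rw [gchain_add_self, gchain_add_self, add_zero]
    exact this _ _
  | cons w rest ih =>
    intro x y z h
    simp only [List.Chain', List.isChain_cons_cons] at h
    obtain ⟨hyx, hzy, htail⟩ := h
    have hchain' : (y :: z :: w :: rest).Chain' (fun p q => q ≤ p) := by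
      simp only [List.Chain', List.isChain_cons_cons]
      exact ⟨hzy, htail⟩
    set T := stairs (z :: w :: rest) with hT
    -- peel the first two terms
    have hsum : ∑ i ∈ Finset.range (rest.length + 4),
        stairs ((x :: y :: z :: w :: rest).eraseIdx i)
        = (∑ i ∈ Finset.range (rest.length + 2),
            stairs (x :: y :: (z :: w :: rest).eraseIdx i))
          + stairs (x :: z :: w :: rest) + stairs (y :: z :: w :: rest) := by
      rw [show rest.length + 4 = (rest.length + 3) + 1 from rfl, Finset.sum_range_succ']
      rw [show rest.length + 3 = (rest.length + 2) + 1 from rfl, Finset.sum_range_succ']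
      simp only [List.eraseIdx_cons_succ, List.eraseIdx_cons_zero]
    -- the induction hypothesis, for y z w
    have hIH := ih y z w hchain'
    rw [show rest.length + 3 = (rest.length + 2) + 1 from rfl, Finset.sum_range_succ'] at hIH
    simp only [List.eraseIdx_cons_succ, List.eraseIdx_cons_zero] at hIH
    -- hence the inner sum equals stairs (z :: w :: rest)
    have hS : ∑ i ∈ Finset.range (rest.length + 2),
        stairs (y :: (z :: w :: rest).eraseIdx i) = T := by
      have h2 := congrArg (· + T) hIH
      simp only [zero_add] at h2
      rw [add_assoc, ← hT, gchain_add_self, add_zero] at h2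
      exact h2
    show ∑ i ∈ Finset.range ((w :: rest).length + 3),
        stairs ((x :: y :: z :: w :: rest).eraseIdx i) = 0
    rw [show (w :: rest).length + 3 = rest.length + 4 by simp, hsum]
    have hterm : ∀ i, stairs (x :: y :: (z :: w :: rest).eraseIdx i)
        = prodC (stairs (y :: (z :: w :: rest).eraseIdx i)) (intervalC y x) := fun i => rfl
    rw [Finset.sum_congr rfl (fun i _ => hterm i), ← prodC_sum_left, hS]
    have e1 : stairs (x :: z :: w :: rest)
        = prodC T (intervalC z y) + prodC T (intervalC y x) := by
      show prodC T (intervalC z x) = _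
      rw [intervalC_split hzy hyx, prodC_add_right]
    have e2 : stairs (y :: z :: w :: rest) = prodC T (intervalC z y) := rfl
    rw [e1, e2]
    have hab : prodC T (intervalC y x) + (prodC T (intervalC z y) + prodC T (intervalC y x))
        + prodC T (intervalC z y)
        = (prodC T (intervalC y x) + prodC T (intervalC y x))
          + (prodC T (intervalC z y) + prodC T (intervalC z y)) := by abel
    rw [hab, gchain_add_self, gchain_add_self, add_zero]

lemma main_lemma (r : List ℕ) (hr : 3 ≤ r.length)
    (hc : r.Chain' (fun p q => q ≤ p)) :
    ∑ i ∈ Finset.range r.length, stairs (r.eraseIdx i) = 0 := by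
  match r, hr with
  | x :: y :: z :: rest, _ =>
    have := main_aux rest x y z hc
    simpa [add_comm, add_assoc, add_left_comm] using this

lemma reverse_eraseIdx {α : Type*} (l : List α) (i : ℕ) (h : i < l.length) :
    (l.eraseIdx i).reverse = l.reverse.eraseIdx (l.length - 1 - i) := by
  rw [List.eraseIdx_eq_take_drop_succ l i, List.eraseIdx_eq_take_drop_succ l.reverse,
    List.reverse_append, List.take_reverse, List.drop_reverse,
    show l.length - (l.length - 1 - i) = i + 1 by omega,
    show l.length - (l.length - 1 - i + 1) = i by omega]

/-- For `m ≥ 1` and `1 ≤ a₁ < ... < a_{m+2} ≤ n`, the sum over `i` of the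
top-dimensional stair convex chains `stc^m_m(a₁, ..., âᵢ, ..., a_{m+2})` vanishes
in `C_m(G[n]^m; ℤ/2)`. -/
theorem stmt4 (n m : ℕ) (hm : 1 ≤ m)
    (a : Fin (m + 2) → ℕ) (ha : StrictMono a) (h1 : 1 ≤ a 0)
    (hn : a (Fin.last (m + 1)) ≤ n) :
    ∑ i : Fin (m + 2), stc m ((List.ofFn a).eraseIdx i) = 0 := by
  set l := List.ofFn a with hl
  have hlen : l.length = m + 2 := by simp [hl]
  have hstep : ∀ i : ℕ, i < m + 2 →
      stc m (l.eraseIdx i) = stairs (l.reverse.eraseIdx (m + 2 - 1 - i)) := by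
    intro i hi
    have hi' : i < l.length := by omega
    have hlen' : (l.eraseIdx i).length = m + 1 := by
      rw [List.length_eraseIdx, if_pos hi', hlen]
      omega
    rw [stc, stcR_eq_stairs m _ (by simpa using hlen')]
    rw [reverse_eraseIdx l i hi', hlen]
  rw [Fin.sum_univ_eq_sum_range (fun i => stc m (l.eraseIdx i)) (m + 2)]
  rw [Finset.sum_congr rfl (fun i hi => hstep i (Finset.mem_range.mp hi))]
  rw [Finset.sum_range_reflect (fun j => stairs (l.reverse.eraseIdx j)) (m + 2)]
  have hrevlen : l.reverse.length = m + 2 := by simp [hlen]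
  have hchain : l.reverse.Chain' (fun p q => q ≤ p) := by
    rw [List.Chain', List.isChain_reverse]
    have hp : l.Pairwise (· < ·) := List.pairwise_ofFn.mpr (fun i j hij => ha hij)
    exact (hp.imp le_of_lt).isChain
  rw [← hrevlen]
  exact main_lemma l.reverse (by omega) hchain
end

section
/- Boundary of the staircase path: for 1 ≤ a < b ≤ n and m ≥ 1, ∂ stc^m_1(a,b) = (a,...,a) + (b,...,b), i.e., the boundary of the stair convex 1-chain is the sum of the two diagonal endpoint vertices. -/
lemma prodC_zero_right (α : GChain) : prodC α 0 = 0 := by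
  simp [prodC]
lemma prodC_single_single (c d : GCell) (x y : ZMod 2) :
    prodC (Finsupp.single c x) (Finsupp.single d y) = Finsupp.single (c ++ d) (x * y) := by
  simp [prodC, Finsupp.sum_single_index]
lemma prodC_smul_left (x : ZMod 2) (α β : GChain) :
    prodC (x • α) β = x • prodC α β := by
  unfold prodC
  rw [Finsupp.sum_smul_index, Finsupp.smul_sum]
  · refine Finsupp.sum_congr fun c _ => ?_
    rw [Finsupp.smul_sum]
    refine Finsupp.sum_congr fun d _ => ?_
    rw [Finsupp.smul_single, smul_eq_mul, mul_assoc]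
  · intro c; simp
lemma prodC_smul_right (x : ZMod 2) (α β : GChain) :
    prodC α (x • β) = x • prodC α β := by
  unfold prodC
  rw [Finsupp.smul_sum]
  refine Finsupp.sum_congr fun c _ => ?_
  rw [Finsupp.sum_smul_index, Finsupp.smul_sum]
  · refine Finsupp.sum_congr fun d _ => ?_
    rw [Finsupp.smul_single, smul_eq_mul, mul_left_comm]
  · intro d; simp

lemma prodC_nil_left (β : GChain) : prodC (Finsupp.single [] 1) β = β := by
  unfold prodC
  rw [Finsupp.sum_single_index]
  · simp [Finsupp.sum_single]
  · simp
lemma prodC_nil_right (α : GChain) : prodC α (Finsupp.single [] 1) = α := by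
  unfold prodC
  conv_rhs => rw [← Finsupp.sum_single α]
  refine Finsupp.sum_congr fun c _ => ?_
  rw [Finsupp.sum_single_index] <;> simp
lemma prodC_assoc_ssg (c d : GCell) (x y : ZMod 2) (γ : GChain) :
    prodC (prodC (Finsupp.single c x) (Finsupp.single d y)) γ =
      prodC (Finsupp.single c x) (prodC (Finsupp.single d y) γ) := by
  induction γ using Finsupp.induction with
  | zero => simp [prodC_zero_right]
  | single_add e z γ _ _ ih =>
    rw [prodC_add_right, prodC_add_right, prodC_add_right, ih]
    congr 1
    rw [prodC_single_single, prodC_single_single, prodC_single_single,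
      prodC_single_single, List.append_assoc, mul_assoc]
lemma prodC_assoc_sbg (c : GCell) (x : ZMod 2) (β γ : GChain) :
    prodC (prodC (Finsupp.single c x) β) γ =
      prodC (Finsupp.single c x) (prodC β γ) := by
  induction β using Finsupp.induction with
  | zero => simp [prodC_zero_left, prodC_zero_right]
  | single_add d y β _ _ ih =>
    rw [prodC_add_right, prodC_add_left, prodC_add_left, prodC_add_right, ih,
      prodC_assoc_ssg]
lemma prodC_assoc (α β γ : GChain) :
    prodC (prodC α β) γ = prodC α (prodC β γ) := by
  induction α using Finsupp.induction with
  | zero => simp [prodC_zero_left]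
  | single_add c x α _ _ ih =>
    rw [prodC_add_left, prodC_add_left, prodC_add_left, ih, prodC_assoc_sbg]
lemma bnd_zero : bnd 0 = 0 := by simp [bnd]
lemma bnd_single (c : GCell) (x : ZMod 2) : bnd (Finsupp.single c x) = x • bndCell c := by
  unfold bnd
  rw [Finsupp.sum_single_index]
  simp
lemma bnd_add (α β : GChain) : bnd (α + β) = bnd α + bnd β := by
  unfold bnd
  rw [Finsupp.sum_add_index]
  · intro c _; simp
  · intro c _ x y; rw [add_smul]
lemma vtx_cons (a : ℕ) (c : GCell) :
    prodC (vtx a) (Finsupp.single c 1) = Finsupp.single ((a, false) :: c) 1 := by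
  unfold vtx; rw [prodC_single_single, one_mul]; rfl
lemma seg_cons (a : ℕ) (c : GCell) :
    prodC (seg a) (Finsupp.single c 1) = Finsupp.single ((a, true) :: c) 1 := by
  unfold seg; rw [prodC_single_single, one_mul]; rfl
lemma single_append (c d : GCell) :
    (Finsupp.single (c ++ d) 1 : GChain) =
      prodC (Finsupp.single c 1) (Finsupp.single d 1) := by
  rw [prodC_single_single, one_mul]
lemma bndCell_append (c d : GCell) :
    bndCell (c ++ d) =
      prodC (bndCell c) (Finsupp.single d 1) + prodC (Finsupp.single c 1) (bndCell d) := by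
  induction c with
  | nil => simp [bndCell, prodC_zero_left, prodC_nil_left]
  | cons e c ih =>
    obtain ⟨a, _ | _⟩ := e
    · show prodC (vtx a) (bndCell (c ++ d)) =
        prodC (prodC (vtx a) (bndCell c)) (Finsupp.single d 1) +
          prodC (Finsupp.single ((a, false) :: c) 1) (bndCell d)
      rw [ih, prodC_add_right, prodC_assoc, ← vtx_cons, prodC_assoc]
    · show prodC (vtx a + vtx (a + 1)) (Finsupp.single (c ++ d) 1) +
          prodC (seg a) (bndCell (c ++ d)) =
        prodC (prodC (vtx a + vtx (a + 1)) (Finsupp.single c 1) +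
          prodC (seg a) (bndCell c)) (Finsupp.single d 1) +
          prodC (Finsupp.single ((a, true) :: c) 1) (bndCell d)
      rw [ih, prodC_add_right, single_append, ← prodC_assoc, prodC_add_left,
        ← prodC_assoc (seg a) (bndCell c), ← prodC_assoc (seg a) (Finsupp.single c 1),
        seg_cons, prodC_add_left, prodC_add_left, prodC_add_left]
      abel
lemma bnd_prodC_ss (c d : GCell) (x y : ZMod 2) :
    bnd (prodC (Finsupp.single c x) (Finsupp.single d y)) =
      prodC (bnd (Finsupp.single c x)) (Finsupp.single d y) +
        prodC (Finsupp.single c x) (bnd (Finsupp.single d y)) := by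
  have hx : (Finsupp.single c x : GChain) = x • Finsupp.single c 1 := by
    rw [Finsupp.smul_single, smul_eq_mul, mul_one]
  have hy : (Finsupp.single d y : GChain) = y • Finsupp.single d 1 := by
    rw [Finsupp.smul_single, smul_eq_mul, mul_one]
  rw [prodC_single_single, bnd_single, bnd_single, bnd_single, bndCell_append, smul_add]
  rw [hx, hy, prodC_smul_left, prodC_smul_right, prodC_smul_left, prodC_smul_right]
  rw [mul_smul, mul_comm x y, mul_smul]
  rw [smul_comm y x]
lemma bnd_prodC_sb (c : GCell) (x : ZMod 2) (β : GChain) :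
    bnd (prodC (Finsupp.single c x) β) =
      prodC (bnd (Finsupp.single c x)) β + prodC (Finsupp.single c x) (bnd β) := by
  induction β using Finsupp.induction with
  | zero => simp [prodC_zero_right, bnd_zero]
  | single_add d y β _ _ ih =>
    rw [prodC_add_right, bnd_add, bnd_add, prodC_add_right, prodC_add_right, ih,
      bnd_prodC_ss]
    abel
lemma bnd_prodC (α β : GChain) :
    bnd (prodC α β) = prodC (bnd α) β + prodC α (bnd β) := by
  induction α using Finsupp.induction with
  | zero => simp [prodC_zero_left, bnd_zero]
  | single_add c x α _ _ ih =>
    rw [prodC_add_left, bnd_add, bnd_add, prodC_add_left, prodC_add_left, ih,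
      bnd_prodC_sb]
    abel

lemma bnd_vtx (a : ℕ) : bnd (vtx a) = 0 := by
  rw [vtx, bnd_single]
  show (1 : ZMod 2) • bndCell [(a, false)] = 0
  rw [one_smul]
  show prodC (vtx a) (bndCell []) = 0
  show prodC (vtx a) 0 = 0
  exact prodC_zero_right _
lemma bnd_seg (a : ℕ) : bnd (seg a) = vtx a + vtx (a + 1) := by
  rw [seg, bnd_single, one_smul]
  show prodC (vtx a + vtx (a + 1)) (Finsupp.single [] 1) + prodC (seg a) (bndCell []) = _
  show prodC (vtx a + vtx (a + 1)) (Finsupp.single [] 1) + prodC (seg a) 0 = _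
  rw [prodC_nil_right, prodC_zero_right, add_zero]
lemma bnd_intervalC (a b : ℕ) (hab : a ≤ b) : bnd (intervalC a b) = vtx a + vtx b := by
  induction b, hab using Nat.le_induction with
  | base =>
    rw [intervalC]
    simp [bnd_zero, gchain_add_self]
  | succ b hb ih =>
    rw [intervalC, min_eq_left (hb.trans b.le_succ), max_eq_right (hb.trans b.le_succ),
      Finset.sum_Ico_succ_top hb, bnd_add]
    rw [intervalC, min_eq_left hb, max_eq_right hb] at ih
    rw [ih, bnd_seg]
    have : vtx a + vtx b + (vtx b + vtx (b + 1)) =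
        vtx a + vtx (b + 1) + (vtx b + vtx b) := by abel
    rw [this, gchain_add_self, add_zero]
lemma stcR_single (m a : ℕ) : stcR m [a] = diag m a := by
  induction m with
  | zero => rfl
  | succ m ih =>
    show prodC (stcR m [a]) (vtx a) = _
    rw [ih, diag, vtx, prodC_single_single, one_mul, diag, ← List.replicate_succ']
lemma bnd_diag (m a : ℕ) : bnd (diag m a) = 0 := by
  induction m with
  | zero =>
    rw [diag, bnd_single, one_smul]
    rfl
  | succ m ih =>
    rw [diag, List.replicate_succ]
    show bnd (Finsupp.single ([(a, false)] ++ List.replicate m (a, false)) 1) = 0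
    rw [single_append, bnd_prodC]
    have h1 : (Finsupp.single [(a, false)] 1 : GChain) = vtx a := rfl
    have h2 : (Finsupp.single (List.replicate m (a, false)) 1 : GChain) = diag m a := rfl
    rw [h1, h2, bnd_vtx, ih, prodC_zero_left, prodC_zero_right, add_zero]

/-- Boundary of the staircase path: for `1 ≤ a < b ≤ n` and `m ≥ 1`,
`∂ stc^m_1(a,b) = (a,...,a) + (b,...,b)`, the sum of the two diagonal endpoints. -/
theorem stmt19 (n m a b : ℕ) (hm : 1 ≤ m) (h1 : 1 ≤ a) (hab : a < b) (hn : b ≤ n) :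
    bnd (stc m [a, b]) = diag m a + diag m b := by
  clear h1 hn
  induction m, hm using Nat.le_induction with
  | base =>
    show bnd (stcR 1 [b, a]) = _
    show bnd (prodC (stcR 0 [a]) (intervalC a b) + prodC (stcR 0 [b, a]) (vtx b)) = _
    have h0 : stcR 0 [b, a] = 0 := rfl
    rw [h0, prodC_zero_left, add_zero, stcR_single,
      show diag 0 a = (Finsupp.single [] 1 : GChain) from rfl, prodC_nil_left,
      bnd_intervalC a b hab.le]
    rfl
  | succ m hm ih =>
    show bnd (stcR (m + 1) [b, a]) = _
    show bnd (prodC (stcR m [a]) (intervalC a b) + prodC (stcR m [b, a]) (vtx b)) = _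
    have hs : stcR m [b, a] = stc m [a, b] := rfl
    rw [hs, bnd_add, bnd_prodC, bnd_prodC, stcR_single, bnd_diag, prodC_zero_left,
      zero_add, bnd_intervalC a b hab.le, bnd_vtx, prodC_zero_right, add_zero, ih,
      prodC_add_right, prodC_add_left]
    have hstc : stc m [a, b] = stcR m [b, a] := rfl
    have hda : prodC (diag m a) (vtx a) = diag (m + 1) a := by
      rw [diag, vtx, prodC_single_single, one_mul, ← List.replicate_succ', diag]
    have hdb : prodC (diag m b) (vtx b) = diag (m + 1) b := by
      rw [diag, vtx, prodC_single_single, one_mul, ← List.replicate_succ', diag]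
    rw [hda, hdb,
      show diag (m + 1) a + prodC (diag m a) (vtx b) +
          (prodC (diag m a) (vtx b) + diag (m + 1) b) =
        diag (m + 1) a + diag (m + 1) b +
          (prodC (diag m a) (vtx b) + prodC (diag m a) (vtx b)) from by abel,
      gchain_add_self, add_zero]
end
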